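/- Let A be a bounded self-adjoint operator with ∥A² - A∥ ≤ ε < 1/4. Then the spectral projection P of A onto the part of the spectrum contained in {λ : |λ - 1| < 1/2} satisfies ∥P - A∥ ≤ Cε for a constant C depending only on the spectral bound, i.e., ∥P - A∥ = O(ε). -/

import Mathlib

open ContinuousLinearMap

/-- If `A` is self-adjoint with `ε := ‖A² - A‖ < 1/4`, then the spectral projection
`P = 1_{(1/2, ∞)}(A)` of `A` onto the part of its spectrum near `1` satisfies
`‖P - A‖ ≤ C·ε` for a universal constant `C`, i.e. `‖P - A‖ = O(ε)`. -/
theorem spectral_projection_close_to_almost_projection :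
    ∃ C : ℝ, 0 < C ∧
      ∀ (H : Type) [NormedAddCommGroup H] [InnerProductSpace ℂ H] [CompleteSpace H],
        ∀ A : H →L[ℂ] H, IsSelfAdjoint A → ‖A ∘L A - A‖ < 1 / 4 →
          ‖cfc (fun x : ℝ => if 1 / 2 < x then (1 : ℝ) else 0) A - A‖
            ≤ C * ‖A ∘L A - A‖ := by
  refine ⟨2, by norm_num, fun H _ _ _ A hA hε => ?_⟩
  set ε := ‖A ∘L A - A‖ with hεdef
  have hε0 : 0 ≤ ε := norm_nonneg _
  set f : ℝ → ℝ := fun x => if 1 / 2 < x then (1 : ℝ) else 0 with hf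
  -- key: A ∘L A - A = cfc (fun x => x^2 - x) A
  have hsq : cfc (fun x : ℝ => x ^ 2 - x) A = A ∘L A - A := by
    rw [cfc_sub _ _ A (by fun_prop) (by fun_prop), cfc_pow_id A, cfc_id' ℝ A, sq,
      ContinuousLinearMap.mul_def]
  have hspec : ∀ x ∈ spectrum ℝ A, |x ^ 2 - x| ≤ ε := by
    intro x hx
    have hmem : x ^ 2 - x ∈ spectrum ℝ (A ∘L A - A) := by
      rw [← hsq]
      exact cfc_map_spectrum (fun x : ℝ => x ^ 2 - x) A ▸ ⟨x, hx, rfl⟩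
    have h1 := spectrum.norm_le_norm_mul_of_mem hmem
    have h2 : ‖(1 : H →L[ℂ] H)‖ ≤ 1 := ContinuousLinearMap.norm_id_le
    have h3 : ‖A ∘L A - A‖ * ‖(1 : H →L[ℂ] H)‖ ≤ ε * 1 :=
      mul_le_mul_of_nonneg_left h2 (norm_nonneg _)
    calc |x ^ 2 - x| = ‖x ^ 2 - x‖ := rfl
      _ ≤ ε := by rw [← mul_one ε]; exact h1.trans h3
  -- pointwise bound on spectrum
  have hpt : ∀ x ∈ spectrum ℝ A, |f x - x| ≤ 2 * ε := by
    intro x hx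
    have h1 := hspec x hx
    have h2 : |x| * |x - 1| ≤ ε := by
      rw [← abs_mul]
      rw [show x * (x - 1) = x ^ 2 - x by ring]; exact h1
    by_cases hc : 1 / 2 < x
    · have hfx : f x = 1 := if_pos hc
      rw [hfx]
      have hxa : (1 : ℝ) / 2 ≤ |x| := by
        rw [abs_of_pos (by linarith)]; linarith
      have : |x - 1| * (1 / 2) ≤ |x| * |x - 1| := by
        rw [mul_comm (|x|)]
        exact mul_le_mul_of_nonneg_left hxa (abs_nonneg _)
      have h3 : |x - 1| ≤ 2 * ε := by nlinarith [abs_nonneg (x - 1)]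
      calc |1 - x| = |x - 1| := abs_sub_comm _ _
        _ ≤ 2 * ε := h3
    · have hfx : f x = 0 := if_neg hc
      rw [hfx]
      push_neg at hc
      have hxa : (1 : ℝ) / 2 ≤ |x - 1| := by
        rw [abs_of_nonpos (by linarith)]; linarith
      have : |x| * (1 / 2) ≤ |x| * |x - 1| :=
        mul_le_mul_of_nonneg_left hxa (abs_nonneg _)
      have h3 : |x| ≤ 2 * ε := by nlinarith [abs_nonneg x]
      simpa using h3
  -- continuity of f on spectrum
  have hfc : ContinuousOn f (spectrum ℝ A) := by
    intro x hx
    have hx12 : x ≠ 1 / 2 := by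
      intro h
      have := hspec x hx
      rw [h, show ((1:ℝ)/2) ^ 2 - 1/2 = -(1/4) by norm_num, abs_neg,
        abs_of_pos (by norm_num)] at this
      linarith
    rcases lt_or_gt_of_ne hx12 with h | h
    · refine ContinuousAt.continuousWithinAt ?_
      have : f =ᶠ[nhds x] fun _ => (0 : ℝ) := by
        filter_upwards [Iio_mem_nhds h] with y hy
        exact if_neg (by simp at hy ⊢; linarith)
      exact continuousAt_const.congr this.symm
    · refine ContinuousAt.continuousWithinAt ?_
      have : f =ᶠ[nhds x] fun _ => (1 : ℝ) := by
        filter_upwards [Ioi_mem_nhds h] with y hy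
        exact if_pos (by simpa using hy)
      exact continuousAt_const.congr this.symm
  have key : cfc f A - A = cfc (fun x => f x - x) A := by
    rw [cfc_sub _ _ A hfc (by fun_prop), cfc_id' ℝ A]
  rw [key]
  exact norm_cfc_le (by linarith) fun x hx => by
    rw [Real.norm_eq_abs]; exact hpt x hx
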